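/- Let G, H ∈ ℂ^{n×n} be sectorial matrices with phase intervals [φ̲(G), φ̄(G)] and [φ̲(H), φ̄(H)]. If φ̄(G) + φ̄(H) < π and φ̲(G) + φ̲(H) > −π, then det(I + GH) ≠ 0. -/

import Mathlib

open Matrix

section Helpers

open Complex

/-- Rotating a polar-form term. -/
lemma small_phase_rot_term (p γ μ : ℝ) :
    Complex.exp (↑μ * I) * ((p : ℂ) * Complex.exp (↑γ * I))
      = (p : ℂ) * Complex.exp (↑(γ + μ) * I) := by
  rw [mul_comm (Complex.exp (↑μ * I)), mul_assoc, ← Complex.exp_add]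
  push_cast
  ring_nf

lemma small_phase_term_im (p γ : ℝ) :
    ((p : ℂ) * Complex.exp (↑γ * I)).im = p * Real.sin γ := by
  simp [Complex.exp_ofReal_mul_I_im]

lemma small_phase_term_re (p γ : ℝ) :
    ((p : ℂ) * Complex.exp (↑γ * I)).re = p * Real.cos γ := by
  simp [Complex.exp_ofReal_mul_I_re]

lemma small_phase_sum_rot_im {n : ℕ} (p γ : Fin n → ℝ) (μ : ℝ) :
    (Complex.exp (↑μ * I) * ∑ i, (p i : ℂ) * Complex.exp (↑(γ i) * I)).im
      = ∑ i, p i * Real.sin (γ i + μ) := by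
  rw [Finset.mul_sum, Complex.im_sum]
  exact Finset.sum_congr rfl fun i _ => by rw [small_phase_rot_term, small_phase_term_im]

lemma small_phase_sum_rot_re {n : ℕ} (p γ : Fin n → ℝ) (μ : ℝ) :
    (Complex.exp (↑μ * I) * ∑ i, (p i : ℂ) * Complex.exp (↑(γ i) * I)).re
      = ∑ i, p i * Real.cos (γ i + μ) := by
  rw [Finset.mul_sum, Complex.re_sum]
  exact Finset.sum_congr rfl fun i _ => by rw [small_phase_rot_term, small_phase_term_re]

lemma small_phase_rot_neg_conj (a : ℂ) (μ : ℝ) :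
    Complex.exp (↑μ * I) * (-(starRingEnd ℂ) a)
      = -(starRingEnd ℂ) (Complex.exp (↑(-μ) * I) * a) := by
  rw [mul_neg, _root_.map_mul, ← Complex.exp_conj, _root_.map_mul, Complex.conj_ofReal, Complex.conj_I]
  push_cast
  ring_nf

/-- Quadratic form of a sectorially decomposed matrix, as a phase sum. -/
lemma small_phase_quadform (n : ℕ) (V : Matrix (Fin n) (Fin n) ℂ) (e : Fin n → ℂ)
    (y : Fin n → ℂ) :
    star y ⬝ᵥ ((Vᴴ * Matrix.diagonal e * V) *ᵥ y)
      = ∑ i, e i * ((Complex.normSq ((V *ᵥ y) i) : ℝ) : ℂ) := by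
  rw [← Matrix.mulVec_mulVec, ← Matrix.mulVec_mulVec, Matrix.dotProduct_mulVec,
    ← Matrix.star_mulVec]
  simp only [dotProduct, Matrix.mulVec_diagonal, Pi.star_apply]
  refine Finset.sum_congr rfl fun i _ => ?_
  rw [show star ((V *ᵥ y) i) * (e i * (V *ᵥ y) i)
      = e i * ((V *ᵥ y) i * (starRingEnd ℂ) ((V *ᵥ y) i)) by simp [RCLike.star_def]; ring,
    Complex.mul_conj]

/-- The purely real core of the small phase argument. -/
lemma small_phase_real_core {α L U LH UH : ℝ}
    (hα1 : -Real.pi < α) (hα2 : α ≤ Real.pi)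
    (hL : -Real.pi < L) (hU : U ≤ Real.pi) (hLU : L ≤ U)
    (hLH : LH ≤ UH)
    (hsu : U + UH < Real.pi) (hsl : -Real.pi < L + LH)
    (h1 : 0 ≤ Real.sin (α - L)) (h2 : Real.sin (α - U) ≤ 0)
    (h6 : 0 < Real.cos (α - (L + U) / 2))
    (h3 : 0 ≤ Real.sin (α + LH)) (h4 : Real.sin (α + UH) ≤ 0)
    (h5 : Real.cos (α + (LH + UH) / 2) < 0) : False := by
  have pi_pos := Real.pi_pos
  have hge : L ≤ α := by
    by_contra hlt
    push_neg at hlt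
    have h0 : α - L ≤ -Real.pi := by
      by_contra h'
      push_neg at h'
      have : Real.sin (α - L) < 0 := Real.sin_neg_of_neg_of_neg_pi_lt (by linarith) h'
      linarith
    have h0' : α - U = -Real.pi := by
      by_contra h'
      have hlt2 : α - U < -Real.pi := lt_of_le_of_ne (by linarith) h'
      have hpos : 0 < Real.sin (α - U + 2 * Real.pi) :=
        Real.sin_pos_of_pos_of_lt_pi (by linarith) (by linarith)
      rw [Real.sin_add_two_pi] at hpos
      linarith
    have hUL : L = U := le_antisymm hLU (by linarith)
    have : α - (L + U) / 2 = -Real.pi := by rw [← hUL]; linarith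
    rw [this, Real.cos_neg, Real.cos_pi] at h6
    linarith
  have hle : α ≤ U := by
    by_contra hlt
    push_neg at hlt
    have h0 : Real.pi ≤ α - U := by
      by_contra h'
      push_neg at h'
      have : 0 < Real.sin (α - U) := Real.sin_pos_of_pos_of_lt_pi (by linarith) h'
      linarith
    have h0' : α - L = Real.pi := by
      by_contra h'
      have hlt2 : Real.pi < α - L := lt_of_le_of_ne (by linarith) (Ne.symm h')
      have hneg : Real.sin (α - L - 2 * Real.pi) < 0 :=
        Real.sin_neg_of_neg_of_neg_pi_lt (by linarith) (by linarith)
      rw [Real.sin_sub_two_pi] at hneg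
      linarith
    have hUL : L = U := le_antisymm hLU (by linarith)
    have : α - (L + U) / 2 = Real.pi := by rw [← hUL]; linarith
    rw [this, Real.cos_pi] at h6
    linarith
  have k4 : α + UH ≤ 0 := by
    by_contra h'
    push_neg at h'
    have : 0 < Real.sin (α + UH) := Real.sin_pos_of_pos_of_lt_pi h' (by linarith)
    linarith
  have k3 : α + LH = 0 := by
    by_contra h'
    have hlt2 : α + LH < 0 := lt_of_le_of_ne (by linarith) h'
    have : Real.sin (α + LH) < 0 := Real.sin_neg_of_neg_of_neg_pi_lt hlt2 (by linarith)
    linarith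
  have kU : α + UH = 0 := le_antisymm k4 (by linarith)
  have : α + (LH + UH) / 2 = 0 := by linarith
  rw [this, Real.cos_zero] at h5
  linarith

end Helpers

set_option maxHeartbeats 1000000 in
theorem matrix_small_phase_theorem (n : ℕ)
    (G H V W : Matrix (Fin n) (Fin n) ℂ) (e f : Fin n → ℂ)
    (φlG φuG φlH φuH : ℝ)
    (hV : IsUnit V.det) (hW : IsUnit W.det)
    (he : ∀ i, ‖e i‖ = 1) (hf : ∀ i, ‖f i‖ = 1)
    (hG : G = Vᴴ * Matrix.diagonal e * V)
    (hH : H = Wᴴ * Matrix.diagonal f * W)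
    (heArg : ∀ i, Complex.arg (e i) ∈ Set.Icc φlG φuG)
    (hfArg : ∀ i, Complex.arg (f i) ∈ Set.Icc φlH φuH)
    (hGarc : φuG - φlG < Real.pi) (hHarc : φuH - φlH < Real.pi)
    (hsum_u : φuG + φuH < Real.pi) (hsum_l : -Real.pi < φlG + φlH) :
    (1 + G * H).det ≠ 0 := by
  intro hdet
  obtain ⟨x, hx0, hxeq⟩ := Matrix.exists_mulVec_eq_zero_iff.mpr hdet
  set y : Fin n → ℂ := H *ᵥ x with hy
  have hGy : G *ᵥ y = -x := by
    rw [Matrix.add_mulVec, Matrix.one_mulVec, ← Matrix.mulVec_mulVec] at hxeq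
    exact eq_neg_of_add_eq_zero_right hxeq
  have hy0 : y ≠ 0 := by
    intro h
    rw [h, Matrix.mulVec_zero] at hGy
    exact hx0 (by simpa using hGy.symm)
  set z : Fin n → ℂ := V *ᵥ y with hz
  set w : Fin n → ℂ := W *ᵥ x with hw
  have hz0 : z ≠ 0 := fun h =>
    hV.ne_zero (Matrix.exists_mulVec_eq_zero_iff.mp ⟨y, hy0, h⟩)
  have hw0 : w ≠ 0 := fun h =>
    hW.ne_zero (Matrix.exists_mulVec_eq_zero_iff.mp ⟨x, hx0, h⟩)
  set p : Fin n → ℝ := fun i => Complex.normSq (z i) with hp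
  set q : Fin n → ℝ := fun i => Complex.normSq (w i) with hq
  set α : Fin n → ℝ := fun i => (e i).arg with hα
  set β : Fin n → ℝ := fun i => (f i).arg with hβ
  have hae : ∀ i, e i = Complex.exp (↑(α i) * Complex.I) := by
    intro i
    have h1 := Complex.norm_mul_exp_arg_mul_I (e i)
    have h2 : ‖e i‖ = 1 := by exact he i
    rw [h2, Complex.ofReal_one, one_mul] at h1
    exact h1.symm
  have hbf : ∀ i, f i = Complex.exp (↑(β i) * Complex.I) := by
    intro i
    have h1 := Complex.norm_mul_exp_arg_mul_I (f i)
    have h2 : ‖f i‖ = 1 := by exact hf i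
    rw [h2, Complex.ofReal_one, one_mul] at h1
    exact h1.symm
  -- the two quadratic forms
  set a : ℂ := star y ⬝ᵥ (G *ᵥ y) with ha
  set b : ℂ := star x ⬝ᵥ (H *ᵥ x) with hb
  have ha_sum : a = ∑ i, (p i : ℂ) * Complex.exp (↑(α i) * Complex.I) := by
    rw [ha, hG, small_phase_quadform]
    exact Finset.sum_congr rfl fun i _ => by rw [← hae i]; ring
  have hb_sum : b = ∑ i, (q i : ℂ) * Complex.exp (↑(β i) * Complex.I) := by
    rw [hb, hH, small_phase_quadform]
    exact Finset.sum_congr rfl fun i _ => by rw [← hbf i]; ring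
  have hab : b = -(starRingEnd ℂ) a := by
    have h1 : a = -(star y ⬝ᵥ x) := by rw [ha, hGy]; simp [dotProduct_neg]
    have h2 : b = star x ⬝ᵥ y := by rw [hb]
    rw [h2, Matrix.star_dotProduct, show star (star y ⬝ᵥ x) = (starRingEnd ℂ) (star y ⬝ᵥ x)
      from rfl, show star y ⬝ᵥ x = -a by rw [h1]; ring]
    simp
  -- extremal phases
  obtain ⟨i0, hi0⟩ : ∃ i, x i ≠ 0 := Function.ne_iff.mp hx0
  have hne : (Finset.univ : Finset (Fin n)).Nonempty := ⟨i0, Finset.mem_univ i0⟩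
  obtain ⟨jm, -, hjm⟩ := Finset.exists_min_image Finset.univ α hne
  obtain ⟨jM, -, hjM⟩ := Finset.exists_max_image Finset.univ α hne
  obtain ⟨km, -, hkm⟩ := Finset.exists_min_image Finset.univ β hne
  obtain ⟨kM, -, hkM⟩ := Finset.exists_max_image Finset.univ β hne
  set L : ℝ := α jm with hLdef
  set U : ℝ := α jM with hUdef
  set LH : ℝ := β km with hLHdef
  set UH : ℝ := β kM with hUHdef
  have hLa : ∀ i, L ≤ α i := fun i => hjm i (Finset.mem_univ i)
  have hUa : ∀ i, α i ≤ U := fun i => hjM i (Finset.mem_univ i)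
  have hLb : ∀ i, LH ≤ β i := fun i => hkm i (Finset.mem_univ i)
  have hUb : ∀ i, β i ≤ UH := fun i => hkM i (Finset.mem_univ i)
  have hUG : U ≤ φuG := (heArg jM).2
  have hLG : φlG ≤ L := (heArg jm).1
  have hUH' : UH ≤ φuH := (hfArg kM).2
  have hLH' : φlH ≤ LH := (hfArg km).1
  have hULpi : U - L < Real.pi := by linarith
  have hULHpi : UH - LH < Real.pi := by linarith
  -- polar form of a
  set r : ℝ := ‖a‖ with hr
  set αa : ℝ := a.arg with hαa
  have haP : a = ↑r * Complex.exp (↑αa * Complex.I) := (Complex.norm_mul_exp_arg_mul_I a).symm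
  have key_im : ∀ μ : ℝ, r * Real.sin (αa + μ) = ∑ i, p i * Real.sin (α i + μ) := by
    intro μ
    have h1 : (Complex.exp (↑μ * Complex.I) * a).im = r * Real.sin (αa + μ) := by
      rw [haP, small_phase_rot_term, small_phase_term_im]
    have h2 : (Complex.exp (↑μ * Complex.I) * a).im = ∑ i, p i * Real.sin (α i + μ) := by
      rw [ha_sum, small_phase_sum_rot_im]
    rw [← h1, h2]
  have key_re : ∀ μ : ℝ, r * Real.cos (αa + μ) = ∑ i, p i * Real.cos (α i + μ) := by
    intro μ
    have h1 : (Complex.exp (↑μ * Complex.I) * a).re = r * Real.cos (αa + μ) := by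
      rw [haP, small_phase_rot_term, small_phase_term_re]
    have h2 : (Complex.exp (↑μ * Complex.I) * a).re = ∑ i, p i * Real.cos (α i + μ) := by
      rw [ha_sum, small_phase_sum_rot_re]
    rw [← h1, h2]
  have key_im_b : ∀ μ : ℝ, r * Real.sin (αa - μ) = ∑ i, q i * Real.sin (β i + μ) := by
    intro μ
    have h0 : (Complex.exp (↑μ * Complex.I) * b).im
        = (Complex.exp (↑(-μ) * Complex.I) * a).im := by
      rw [hab, small_phase_rot_neg_conj]
      simp
      ring
    have h1 : (Complex.exp (↑(-μ) * Complex.I) * a).im = r * Real.sin (αa - μ) := by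
      rw [haP, small_phase_rot_term, small_phase_term_im, show αa + -μ = αa - μ by ring]
    have h2 : (Complex.exp (↑μ * Complex.I) * b).im = ∑ i, q i * Real.sin (β i + μ) := by
      rw [hb_sum, small_phase_sum_rot_im]
    rw [← h1, ← h0, h2]
  have key_re_b : ∀ μ : ℝ, -(r * Real.cos (αa - μ)) = ∑ i, q i * Real.cos (β i + μ) := by
    intro μ
    have h0 : (Complex.exp (↑μ * Complex.I) * b).re
        = -(Complex.exp (↑(-μ) * Complex.I) * a).re := by
      rw [hab, small_phase_rot_neg_conj]
      simp
    have h1 : (Complex.exp (↑(-μ) * Complex.I) * a).re = r * Real.cos (αa - μ) := by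
      rw [haP, small_phase_rot_term, small_phase_term_re, show αa + -μ = αa - μ by ring]
    have h2 : (Complex.exp (↑μ * Complex.I) * b).re = ∑ i, q i * Real.cos (β i + μ) := by
      rw [hb_sum, small_phase_sum_rot_re]
    rw [← h2, h0, h1]
  have pi_pos := Real.pi_pos
  -- sign facts for the sums
  have hp_nonneg : ∀ i, 0 ≤ p i := fun i => Complex.normSq_nonneg _
  have hq_nonneg : ∀ i, 0 ≤ q i := fun i => Complex.normSq_nonneg _
  have S1 : 0 ≤ ∑ i, p i * Real.sin (α i + -L) :=
    Finset.sum_nonneg fun i _ => mul_nonneg (hp_nonneg i)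
      (Real.sin_nonneg_of_nonneg_of_le_pi (by linarith [hLa i]) (by linarith [hUa i]))
  have S2 : ∑ i, p i * Real.sin (α i + -U) ≤ 0 := by
    refine Finset.sum_nonpos fun i _ => mul_nonpos_of_nonneg_of_nonpos (hp_nonneg i) ?_
    rw [show α i + -U = -(U - α i) by ring, Real.sin_neg, neg_nonpos]
    exact Real.sin_nonneg_of_nonneg_of_le_pi (by linarith [hUa i]) (by linarith [hLa i])
  have S6 : 0 < ∑ i, p i * Real.cos (α i + -((L + U) / 2)) := by
    obtain ⟨iz, hiz⟩ : ∃ i, z i ≠ 0 := Function.ne_iff.mp hz0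
    refine Finset.sum_pos' (fun i _ => mul_nonneg (hp_nonneg i) ?_) ⟨iz, Finset.mem_univ iz, ?_⟩
    · exact le_of_lt (Real.cos_pos_of_mem_Ioo
        ⟨by linarith [hLa i], by linarith [hUa i]⟩)
    · exact mul_pos (Complex.normSq_pos.mpr hiz)
        (Real.cos_pos_of_mem_Ioo ⟨by linarith [hLa iz], by linarith [hUa iz]⟩)
  have S3 : 0 ≤ ∑ i, q i * Real.sin (β i + -LH) :=
    Finset.sum_nonneg fun i _ => mul_nonneg (hq_nonneg i)
      (Real.sin_nonneg_of_nonneg_of_le_pi (by linarith [hLb i]) (by linarith [hUb i]))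
  have S4 : ∑ i, q i * Real.sin (β i + -UH) ≤ 0 := by
    refine Finset.sum_nonpos fun i _ => mul_nonpos_of_nonneg_of_nonpos (hq_nonneg i) ?_
    rw [show β i + -UH = -(UH - β i) by ring, Real.sin_neg, neg_nonpos]
    exact Real.sin_nonneg_of_nonneg_of_le_pi (by linarith [hUb i]) (by linarith [hLb i])
  have S5 : 0 < ∑ i, q i * Real.cos (β i + -((LH + UH) / 2)) := by
    obtain ⟨iw, hiw⟩ : ∃ i, w i ≠ 0 := Function.ne_iff.mp hw0
    refine Finset.sum_pos' (fun i _ => mul_nonneg (hq_nonneg i) ?_) ⟨iw, Finset.mem_univ iw, ?_⟩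
    · exact le_of_lt (Real.cos_pos_of_mem_Ioo
        ⟨by linarith [hLb i], by linarith [hUb i]⟩)
    · exact mul_pos (Complex.normSq_pos.mpr hiw)
        (Real.cos_pos_of_mem_Ioo ⟨by linarith [hLb iw], by linarith [hUb iw]⟩)
  -- positivity of r
  have h6' : 0 < r * Real.cos (αa + -((L + U) / 2)) := by rw [key_re]; exact S6
  have hr_nonneg : 0 ≤ r := norm_nonneg a
  have hr_pos : 0 < r := by
    rcases eq_or_lt_of_le hr_nonneg with h | h
    · rw [← h, zero_mul] at h6'; exact absurd h6' (lt_irrefl 0)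
    · exact h
  -- the six real conditions
  have h1r : 0 ≤ Real.sin (αa - L) := by
    have e1 := key_im (-L)
    rw [show αa + -L = αa - L by ring] at e1
    nlinarith [S1, e1, hr_pos]
  have h2r : Real.sin (αa - U) ≤ 0 := by
    have e1 := key_im (-U)
    rw [show αa + -U = αa - U by ring] at e1
    nlinarith [S2, e1, hr_pos]
  have h6r : 0 < Real.cos (αa - (L + U) / 2) := by
    have e1 := key_re (-((L + U) / 2))
    rw [show αa + -((L + U) / 2) = αa - (L + U) / 2 by ring] at e1
    nlinarith [S6, e1, hr_pos]
  have h3r : 0 ≤ Real.sin (αa + LH) := by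
    have e1 := key_im_b (-LH)
    rw [show αa - -LH = αa + LH by ring] at e1
    nlinarith [S3, e1, hr_pos]
  have h4r : Real.sin (αa + UH) ≤ 0 := by
    have e1 := key_im_b (-UH)
    rw [show αa - -UH = αa + UH by ring] at e1
    nlinarith [S4, e1, hr_pos]
  have h5r : Real.cos (αa + (LH + UH) / 2) < 0 := by
    have e1 := key_re_b (-((LH + UH) / 2))
    rw [show αa - -((LH + UH) / 2) = αa + (LH + UH) / 2 by ring] at e1
    nlinarith [S5, e1, hr_pos]
  exact small_phase_real_core (Complex.neg_pi_lt_arg a) (Complex.arg_le_pi a)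
    (Complex.neg_pi_lt_arg (e jm)) (Complex.arg_le_pi (e jM)) (hLa jM) (hLb kM)
    (by linarith) (by linarith) h1r h2r h6r h3r h4r h5r
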